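/- arXiv:1111.6685 — 2 statements merged into one kernel-verified Lean document; each statement's English description precedes it below -/
import Mathlib

section
/- In a Hamming graph G = ∏_{i=1}^t K_{n_i} with constant threshold 2: if x_A and y_B are two 'subcubes' (sets of vertices agreeing with x on A, resp. with y on B) with minimum pairwise Hamming distance at least 3 between them, then the activation closure of x_A ∪ y_B equals x_A ∪ y_B itself. -/
/-- The Hamming graph `∏ K_{n i}`: vertices are tuples, adjacent iff they differ
in exactly one coordinate (Hamming distance 1). -/
def hammingGraph {t : ℕ} (n : Fin t → ℕ) : SimpleGraph (Π i, Fin (n i)) where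
  Adj x y := hammingDist x y = 1
  symm := ⟨fun x y h => by rwa [hammingDist_comm]⟩
  loopless := ⟨fun x h => by simp [hammingDist_self] at h⟩

/-- The "subcube" `x_A`: all vertices agreeing with `x` on every coordinate in `A`. -/
def subcube {t : ℕ} {n : Fin t → ℕ} (x : Π i, Fin (n i)) (A : Set (Fin t)) :
    Set (Π i, Fin (n i)) :=
  {z | ∀ i ∈ A, z i = x i}

/-- A set `A` is closed under activation: every vertex with at least `θ v`
neighbors in `A` already belongs to `A`. -/
def activationClosed {V : Type*} [Fintype V] (G : SimpleGraph V) (θ : V → ℤ)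
    (A : Set V) : Prop :=
  ∀ v : V, θ v ≤ ((A ∩ G.neighborSet v).ncard : ℤ) → v ∈ A

/-- The activation closure `[S]_θ`: the smallest activation-closed superset of `S`. -/
def activationClosure {V : Type*} [Fintype V] (G : SimpleGraph V) (θ : V → ℤ)
    (S : Set V) : Set V :=
  ⋂₀ {A : Set V | S ⊆ A ∧ activationClosed G θ A}

lemma subcube_nbrs_subsingleton {t : ℕ} {n : Fin t → ℕ} (x : Π i, Fin (n i))
    {A : Set (Fin t)} {v : Π i, Fin (n i)} (hv : v ∉ subcube x A) :
    (subcube x A ∩ (hammingGraph n).neighborSet v).Subsingleton := by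
  simp only [subcube, Set.mem_setOf_eq, not_forall] at hv
  obtain ⟨i, hiA, hvi⟩ := hv
  have key : ∀ w ∈ subcube x A ∩ (hammingGraph n).neighborSet v,
      w = Function.update v i (x i) := by
    rintro w ⟨hw1, hw2⟩
    have hd : hammingDist v w = 1 := hw2
    rw [hammingDist] at hd
    obtain ⟨a, ha⟩ := Finset.card_eq_one.mp hd
    have hwi : w i = x i := hw1 i hiA
    have hi : i ∈ Finset.univ.filter fun j => v j ≠ w j := by
      simp only [Finset.mem_filter, Finset.mem_univ, true_and]
      rw [hwi]; exact hvi
    rw [ha, Finset.mem_singleton] at hi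
    funext j
    by_cases hj : j = i
    · subst hj; simp [Function.update_self, hwi]
    · have : j ∉ Finset.univ.filter fun k => v k ≠ w k := by
        rw [ha, Finset.mem_singleton]; exact fun h => hj (h.trans hi.symm)
      simp only [Finset.mem_filter, Finset.mem_univ, true_and, not_not] at this
      simp [Function.update_of_ne hj, this]
  intro u hu u' hu'
  rw [key u hu, key u' hu']

theorem closure_subcubes_dist_three {t : ℕ} (n : Fin t → ℕ) (hn : ∀ i, 2 ≤ n i)
    (x y : Π i, Fin (n i)) (A B : Set (Fin t))
    (hdist : ∀ u ∈ subcube x A, ∀ v ∈ subcube y B, 3 ≤ hammingDist u v) :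
    activationClosure (hammingGraph n) (fun _ => (2 : ℤ))
      (subcube x A ∪ subcube y B) = subcube x A ∪ subcube y B := by
  have hclosed : activationClosed (hammingGraph n) (fun _ => (2 : ℤ))
      (subcube x A ∪ subcube y B) := by
    intro v hv
    by_contra hvn
    have hvA : v ∉ subcube x A := fun h => hvn (Or.inl h)
    have hvB : v ∉ subcube y B := fun h => hvn (Or.inr h)
    have hsplit : (subcube x A ∪ subcube y B) ∩ (hammingGraph n).neighborSet v
        = (subcube x A ∩ (hammingGraph n).neighborSet v)
          ∪ (subcube y B ∩ (hammingGraph n).neighborSet v) := Set.union_inter_distrib_right ..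
    have h1 := subcube_nbrs_subsingleton x hvA
    have h2 := subcube_nbrs_subsingleton y hvB
    have hc1 : (subcube x A ∩ (hammingGraph n).neighborSet v).ncard ≤ 1 :=
      (Set.ncard_le_one (Set.toFinite _)).mpr (fun a ha b hb => h1 ha hb)
    have hc2 : (subcube y B ∩ (hammingGraph n).neighborSet v).ncard ≤ 1 :=
      (Set.ncard_le_one (Set.toFinite _)).mpr (fun a ha b hb => h2 ha hb)
    have hge : 2 ≤ ((subcube x A ∪ subcube y B) ∩ (hammingGraph n).neighborSet v).ncard := by
      simp only [] at hv; exact_mod_cast hv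
    rw [hsplit] at hge
    have hle := Set.ncard_union_le (subcube x A ∩ (hammingGraph n).neighborSet v)
      (subcube y B ∩ (hammingGraph n).neighborSet v)
    -- both must be nonempty
    have hne1 : (subcube x A ∩ (hammingGraph n).neighborSet v).Nonempty := by
      rw [Set.nonempty_iff_ne_empty]
      intro h
      rw [h, Set.empty_union] at hge
      omega
    have hne2 : (subcube y B ∩ (hammingGraph n).neighborSet v).Nonempty := by
      rw [Set.nonempty_iff_ne_empty]
      intro h
      rw [h, Set.union_empty] at hge
      omega
    obtain ⟨u, huA, huN⟩ := hne1
    obtain ⟨w, hwB, hwN⟩ := hne2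
    have h3 := hdist u huA w hwB
    have htri := hammingDist_triangle u v w
    have hu1 : hammingDist u v = 1 := by
      have : hammingDist v u = 1 := huN
      rwa [hammingDist_comm] at this
    have hv1 : hammingDist v w = 1 := hwN
    omega
  ext z
  constructor
  · intro hz
    exact hz (subcube x A ∪ subcube y B) ⟨subset_rfl, hclosed⟩
  · intro hz C hC
    exact hC.1 hz
end

section
/- For the Hamming graph G = ∏_{i=1}^t K_{n_i} (each n_i ≥ 2, t ≥ 1) with all thresholds equal to 2, the minimum size of a target set whose activation closure is all of V(G) equals 1 + ⌈t/2⌉. -/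
/-- `min-seed(G, θ)`: the minimum size of a target set influencing all of `G`. -/
noncomputable def minSeed {V : Type*} [Fintype V] (G : SimpleGraph V)
    (θ : V → ℤ) : ℕ :=
  sInf {m : ℕ | ∃ S : Set V, activationClosure G θ S = Set.univ ∧ S.ncard = m}

section closure
variable {V : Type*} [Fintype V] (G : SimpleGraph V) (θ : V → ℤ) (S : Set V)

lemma subset_activationClosure : S ⊆ activationClosure G θ S :=
  fun _ hx => fun _ hA => hA.1 hx

lemma activationClosure_subset {A : Set V} (hS : S ⊆ A) (hA : activationClosed G θ A) :
    activationClosure G θ S ⊆ A :=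
  Set.sInter_subset_of_mem ⟨hS, hA⟩

lemma activationClosed_closure : activationClosed G θ (activationClosure G θ S) := by
  intro v hv
  intro A hA
  apply hA.2 v
  refine le_trans hv ?_
  have h1 : activationClosure G θ S ∩ G.neighborSet v ⊆ A ∩ G.neighborSet v :=
    Set.inter_subset_inter_left _ (Set.sInter_subset_of_mem hA)
  exact_mod_cast Set.ncard_le_ncard h1 (Set.toFinite _)

lemma mem_closure_of_two {u w v : V}
    (hu : u ∈ activationClosure G θ S) (hw : w ∈ activationClosure G θ S)
    (huw : u ≠ w) (hau : G.Adj v u) (haw : G.Adj v w) (hθ : θ v ≤ 2) :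
    v ∈ activationClosure G θ S := by
  apply activationClosed_closure G θ S v
  have hsub : ({u, w} : Set V) ⊆ activationClosure G θ S ∩ G.neighborSet v := by
    intro x hx
    rcases hx with rfl | hx
    · exact ⟨hu, hau⟩
    · rcases hx with rfl; exact ⟨hw, haw⟩
  have : 2 ≤ (activationClosure G θ S ∩ G.neighborSet v).ncard := by
    have := Set.ncard_le_ncard hsub (Set.toFinite _)
    rwa [Set.ncard_pair huw] at this
  exact le_trans hθ (by exact_mod_cast this)

end closure

section adj
variable {t : ℕ} {n : Fin t → ℕ}

lemma hamming_adj {x y : Π i, Fin (n i)} :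
    (hammingGraph n).Adj x y ↔ ({i | x i ≠ y i} : Finset (Fin t)).card = 1 := by
  simp only [hammingGraph, hammingDist]

lemma adj_update (z : Π i, Fin (n i)) (j : Fin t) (c : Fin (n j)) (h : c ≠ z j) :
    (hammingGraph n).Adj (Function.update z j c) z := by
  rw [hamming_adj]
  rw [Finset.card_eq_one]
  refine ⟨j, ?_⟩
  ext i
  simp only [Finset.mem_filter, Finset.mem_univ, true_and, Finset.mem_singleton]
  constructor
  · intro hi
    by_contra hij
    exact hi (by rw [Function.update_of_ne hij])
  · rintro rfl
    simpa using h

lemma adj_elim {x y : Π i, Fin (n i)} (h : (hammingGraph n).Adj x y) :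
    ∃ j, x j ≠ y j ∧ ∀ k, k ≠ j → x k = y k := by
  rw [hamming_adj, Finset.card_eq_one] at h
  obtain ⟨j, hj⟩ := h
  refine ⟨j, ?_, ?_⟩
  · have : j ∈ ({i | x i ≠ y i} : Finset (Fin t)) := hj ▸ Finset.mem_singleton_self j
    simpa using this
  · intro k hk
    by_contra hne
    have : k ∈ ({i | x i ≠ y i} : Finset (Fin t)) := by simpa using hne
    rw [hj] at this
    exact hk (Finset.mem_singleton.mp this)

end adj

section lower
variable {t : ℕ} {n : Fin t → ℕ}

abbrev HV (n : Fin t → ℕ) := Π i, Fin (n i)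

/-- coordinates on which a finite set of vertices is non-constant -/
noncomputable def varset (P : Finset (HV n)) : Finset (Fin t) :=
  open scoped Classical in
  {i | ∃ u ∈ P, ∃ w ∈ P, u i ≠ w i}

lemma mem_varset {P : Finset (HV n)} {i : Fin t} :
    i ∈ varset P ↔ ∃ u ∈ P, ∃ w ∈ P, u i ≠ w i := by
  classical
  simp [varset]

noncomputable def pweight (P : Finset (HV n)) : ℕ := (varset P).card + 2

noncomputable def cweight (Ps : Finset (Finset (HV n))) : ℕ := ∑ P ∈ Ps, pweight P

def Good (m : ℕ) (A : Finset (HV n)) : Prop :=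
  ∃ Ps : Finset (Finset (HV n)), (∀ z ∈ A, ∃ P ∈ Ps, z ∈ P) ∧ cweight Ps ≤ m

lemma varset_subset_of_subset {P Q : Finset (HV n)} (h : P ⊆ Q) : varset P ⊆ varset Q := by
  intro i hi
  rw [mem_varset] at hi ⊢
  obtain ⟨u, hu, w, hw, hne⟩ := hi
  exact ⟨u, h hu, w, h hw, hne⟩

lemma card_le_prod_varset {P : Finset (HV n)} (hP : P.Nonempty) :
    P.card ≤ ∏ i ∈ varset P, n i := by
  classical
  obtain ⟨p, hp⟩ := hP
  have hconst : ∀ z ∈ P, ∀ i, i ∉ varset P → z i = p i := by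
    intro z hz i hi
    by_contra hne
    exact hi (mem_varset.mpr ⟨z, hz, p, hp, hne⟩)
  have hinj : Set.InjOn (fun z : HV n => fun i : {x // x ∈ varset P} => z i.1) P := by
    intro a ha b hb hab
    funext i
    by_cases hi : i ∈ varset P
    · exact congrFun hab ⟨i, hi⟩
    · rw [hconst a ha i hi, hconst b hb i hi]
  calc P.card ≤ Fintype.card (∀ i : {x // x ∈ varset P}, Fin (n i.1)) :=
        Finset.card_le_card_of_injOn _ (fun z _ => Finset.mem_univ _) hinj
    _ = ∏ i ∈ varset P, n i := by
        rw [Fintype.card_pi]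
        rw [← Finset.prod_attach (varset P) (fun i => n i)]
        simp

lemma my_sum_insert_le {α M : Type*} [DecidableEq α] [AddCommMonoid M] [PartialOrder M] [IsOrderedAddMonoid M]
    (f : α → M) (a : α) (s : Finset α) (h : 0 ≤ f a) :
    ∑ x ∈ insert a s, f x ≤ f a + ∑ x ∈ s, f x := by
  by_cases ha : a ∈ s
  · rw [Finset.insert_eq_self.mpr ha]
    exact le_add_of_nonneg_left h
  · rw [Finset.sum_insert ha]

lemma pow_two_le_prod_compl (hn : ∀ i, 2 ≤ n i) (P : Finset (HV n)) :
    2 ^ (t - (varset P).card) ≤ ∏ i ∈ (varset P)ᶜ, n i := by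
  classical
  have h1 : (varset P)ᶜ.card = t - (varset P).card := by
    rw [Finset.card_compl, Fintype.card_fin]
  calc 2 ^ (t - (varset P).card) = ∏ _i ∈ (varset P)ᶜ, 2 := by
        rw [Finset.prod_const, h1]
    _ ≤ ∏ i ∈ (varset P)ᶜ, n i := Finset.prod_le_prod' (fun i _ => hn i)

lemma card_mul_pow_le (hn : ∀ i, 2 ≤ n i) (P : Finset (HV n)) :
    P.card * 2 ^ t ≤ (∏ i, n i) * 2 ^ (varset P).card := by
  classical
  rcases P.eq_empty_or_nonempty with rfl | hP
  · simp
  have hd : (varset P).card ≤ t := by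
    have := Finset.card_le_card (Finset.subset_univ (varset P))
    simpa [Fintype.card_fin] using this
  have hsplit : 2 ^ t = 2 ^ (varset P).card * 2 ^ (t - (varset P).card) := by
    rw [← pow_add, Nat.add_sub_cancel' hd]
  rw [hsplit, ← mul_assoc]
  calc P.card * 2 ^ (varset P).card * 2 ^ (t - (varset P).card)
      ≤ (∏ i ∈ varset P, n i) * 2 ^ (varset P).card * (∏ i ∈ (varset P)ᶜ, n i) := by
        apply Nat.mul_le_mul
        · exact Nat.mul_le_mul_right _ (card_le_prod_varset hP)
        · exact pow_two_le_prod_compl hn P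
    _ = ((∏ i ∈ varset P, n i) * (∏ i ∈ (varset P)ᶜ, n i)) * 2 ^ (varset P).card := by
        ring
    _ = (∏ i, n i) * 2 ^ (varset P).card := by
        rw [Finset.prod_mul_prod_compl]

lemma four_mul_sum_pow_le {Ps : Finset (Finset (HV n))} (h : Ps.Nonempty) :
    4 * ∑ P ∈ Ps, 2 ^ (varset P).card ≤ 2 ^ cweight Ps := by
  classical
  induction h using Finset.Nonempty.cons_induction with
  | singleton P =>
      simp only [Finset.sum_singleton, cweight, pweight]
      rw [pow_add]
      omega
  | cons P Ps hP hne IH =>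
      rw [Finset.sum_cons]
      have hw : cweight (Finset.cons P Ps hP) = pweight P + cweight Ps := by
        simp [cweight, Finset.sum_cons, Finset.sum_insert hP]
      rw [hw, pow_add]
      have h2 : 2 ≤ cweight Ps := by
        obtain ⟨Q, hQ⟩ := hne
        calc 2 ≤ pweight Q := by simp [pweight]
          _ ≤ cweight Ps := Finset.single_le_sum (fun _ _ => Nat.zero_le _) hQ
      have hx : (2:ℕ) ≤ 4 * 2 ^ (varset P).card :=
        le_trans (by norm_num) (Nat.mul_le_mul_left 4 (Nat.one_le_two_pow))
      have hy : (2:ℕ) ≤ 2 ^ cweight Ps := by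
        calc (2:ℕ) = 2^1 := rfl
          _ ≤ 2 ^ cweight Ps := Nat.pow_le_pow_right (by norm_num) (by omega)
      have hpw : (2:ℕ) ^ pweight P = 4 * 2 ^ (varset P).card := by
        simp only [pweight, pow_add]
        ring
      rw [hpw]
      have := Nat.add_le_mul hx hy
      omega

lemma good_univ (hn : ∀ i, 2 ≤ n i) {m : ℕ}
    (h : Good m (Finset.univ : Finset (HV n))) : t + 2 ≤ m := by
  classical
  obtain ⟨Ps, hcov, hw⟩ := h
  set N := ∏ i, n i with hN
  have hNpos : 0 < N := Finset.prod_pos (fun i _ => by have := hn i; omega)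
  have hcard : Fintype.card (HV n) = N := by
    rw [Fintype.card_pi]; simp [hN]
  have hNle : N ≤ ∑ P ∈ Ps, P.card := by
    have hsub : (Finset.univ : Finset (HV n)) ⊆ Ps.biUnion id := by
      intro z _
      obtain ⟨P, hP, hz⟩ := hcov z (Finset.mem_univ z)
      exact Finset.mem_biUnion.mpr ⟨P, hP, hz⟩
    calc N = (Finset.univ : Finset (HV n)).card := by rw [Finset.card_univ, hcard]
      _ ≤ (Ps.biUnion id).card := Finset.card_le_card hsub
      _ ≤ ∑ P ∈ Ps, P.card := Finset.card_biUnion_le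
  have hkey : N * 2 ^ t ≤ N * ∑ P ∈ Ps, 2 ^ (varset P).card := by
    calc N * 2 ^ t ≤ (∑ P ∈ Ps, P.card) * 2 ^ t := Nat.mul_le_mul_right _ hNle
      _ = ∑ P ∈ Ps, P.card * 2 ^ t := by rw [Finset.sum_mul]
      _ ≤ ∑ P ∈ Ps, N * 2 ^ (varset P).card :=
          Finset.sum_le_sum (fun P _ => card_mul_pow_le hn P)
      _ = N * ∑ P ∈ Ps, 2 ^ (varset P).card := by rw [Finset.mul_sum]
  have h2t : 2 ^ t ≤ ∑ P ∈ Ps, 2 ^ (varset P).card :=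
    Nat.le_of_mul_le_mul_left hkey hNpos
  have hne : Ps.Nonempty := by
    rcases Ps.eq_empty_or_nonempty with rfl | hne
    · simp at h2t
    · exact hne
  have := four_mul_sum_pow_le hne
  have hfin : 2 ^ (t + 2) ≤ 2 ^ cweight Ps := by
    calc 2 ^ (t + 2) = 4 * 2 ^ t := by ring
      _ ≤ 4 * ∑ P ∈ Ps, 2 ^ (varset P).card := Nat.mul_le_mul_left _ h2t
      _ ≤ 2 ^ cweight Ps := this
  have := (Nat.pow_le_pow_iff_right (by norm_num : 1 < 2)).mp hfin
  omega

lemma good_step {m : ℕ} {A : Finset (HV n)} {v u w : HV n} {i j : Fin t}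
    (hu : u ∈ A) (hw : w ∈ A) (huw : u ≠ w)
    (hvui : v i ≠ u i) (hvu : ∀ k, k ≠ i → v k = u k)
    (hvwj : v j ≠ w j) (hvw : ∀ k, k ≠ j → v k = w k)
    (hG : Good m A) : Good m (insert v A) := by
  classical
  have huwi : u i ≠ w i := by
    by_cases hij : i = j
    · subst hij
      intro he
      apply huw
      funext k
      by_cases hk : k = i
      · subst hk; exact he
      · rw [← hvu k hk, hvw k hk]
    · rw [← hvw i hij]
      exact fun he => hvui he.symm
  have huwj : u j ≠ w j := by
    by_cases hij : i = j
    · subst hij; exact huwi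
    · rw [← hvu j (fun he => hij he.symm)]
      exact hvwj
  obtain ⟨Ps, hcov, hwt⟩ := hG
  obtain ⟨Pu, hPu, huPu⟩ := hcov u hu
  obtain ⟨Pw, hPw, hwPw⟩ := hcov w hw
  by_cases hPuw : Pu = Pw
  · -- same part
    subst hPuw
    have hiv : i ∈ varset Pu := mem_varset.mpr ⟨u, huPu, w, hwPw, huwi⟩
    have hsub : varset (insert v Pu) ⊆ varset Pu := by
      intro k hk
      by_contra hknot
      have hki : k ≠ i := fun he => hknot (he ▸ hiv)
      have hall : ∀ a ∈ insert v Pu, a k = u k := by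
        intro a ha
        rcases Finset.mem_insert.mp ha with hav | ha
        · rw [hav]; exact hvu k hki
        · by_contra hne
          exact hknot (mem_varset.mpr ⟨a, ha, u, huPu, hne⟩)
      obtain ⟨a, ha, b, hb, hab⟩ := mem_varset.mp hk
      exact hab ((hall a ha).trans (hall b hb).symm)
    refine ⟨insert (insert v Pu) (Ps.erase Pu), ?_, ?_⟩
    · intro z hz
      rcases Finset.mem_insert.mp hz with hzv | hz
      · exact ⟨insert v Pu, Finset.mem_insert_self _ _, hzv ▸ Finset.mem_insert_self _ _⟩
      · obtain ⟨Q, hQ, hzQ⟩ := hcov z hz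
        by_cases hQP : Q = Pu
        · subst hQP
          exact ⟨insert v Q, Finset.mem_insert_self _ _, Finset.mem_insert_of_mem hzQ⟩
        · exact ⟨Q, Finset.mem_insert_of_mem (Finset.mem_erase.mpr ⟨hQP, hQ⟩), hzQ⟩
    · calc cweight (insert (insert v Pu) (Ps.erase Pu))
          ≤ pweight (insert v Pu) + cweight (Ps.erase Pu) :=
            my_sum_insert_le _ _ _ (Nat.zero_le _)
        _ ≤ pweight Pu + cweight (Ps.erase Pu) := by
            have := Finset.card_le_card hsub
            simp only [pweight]
            omega
        _ = cweight Ps := Finset.add_sum_erase _ pweight hPu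
        _ ≤ m := hwt
  · -- different parts
    have hPw' : Pw ∈ Ps.erase Pu := Finset.mem_erase.mpr ⟨fun he => hPuw he.symm, hPw⟩
    set Q : Finset (HV n) := insert v (Pu ∪ Pw) with hQdef
    have hQvar : varset Q ⊆ (varset Pu ∪ varset Pw) ∪ {i, j} := by
      intro k hk
      by_contra hknot
      simp only [Finset.mem_union, Finset.mem_insert, Finset.mem_singleton, not_or] at hknot
      obtain ⟨⟨hku, hkw⟩, hki, hkj⟩ := hknot
      have hall : ∀ a ∈ Q, a k = v k := by
        intro a ha
        rcases Finset.mem_insert.mp ha with rfl | ha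
        · rfl
        · rcases Finset.mem_union.mp ha with ha | ha
          · have : a k = u k := by
              by_contra hne
              exact hku (mem_varset.mpr ⟨a, ha, u, huPu, hne⟩)
            rw [this, ← hvu k hki]
          · have : a k = w k := by
              by_contra hne
              exact hkw (mem_varset.mpr ⟨a, ha, w, hwPw, hne⟩)
            rw [this, ← hvw k hkj]
      rw [mem_varset] at hk
      obtain ⟨a, ha, b, hb, hab⟩ := hk
      exact hab ((hall a ha).trans (hall b hb).symm)
    have hQcard : (varset Q).card ≤ (varset Pu).card + (varset Pw).card + 2 := by
      calc (varset Q).card ≤ ((varset Pu ∪ varset Pw) ∪ {i, j}).card :=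
            Finset.card_le_card hQvar
        _ ≤ (varset Pu ∪ varset Pw).card + ({i, j} : Finset (Fin t)).card :=
            Finset.card_union_le _ _
        _ ≤ ((varset Pu).card + (varset Pw).card) + 2 := by
            have h1 := Finset.card_union_le (varset Pu) (varset Pw)
            have h2 : ({i, j} : Finset (Fin t)).card ≤ 2 := Finset.card_le_two
            omega
    refine ⟨insert Q ((Ps.erase Pu).erase Pw), ?_, ?_⟩
    · intro z hz
      rcases Finset.mem_insert.mp hz with hzv | hz
      · exact ⟨Q, Finset.mem_insert_self _ _, hzv ▸ Finset.mem_insert_self _ _⟩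
      · obtain ⟨Q', hQ', hzQ'⟩ := hcov z hz
        by_cases h1 : Q' = Pu
        · subst h1
          exact ⟨Q, Finset.mem_insert_self _ _,
            Finset.mem_insert_of_mem (Finset.mem_union_left _ hzQ')⟩
        · by_cases h2 : Q' = Pw
          · subst h2
            exact ⟨Q, Finset.mem_insert_self _ _,
              Finset.mem_insert_of_mem (Finset.mem_union_right _ hzQ')⟩
          · exact ⟨Q', Finset.mem_insert_of_mem
              (Finset.mem_erase.mpr ⟨h2, Finset.mem_erase.mpr ⟨h1, hQ'⟩⟩), hzQ'⟩
    · have e1 : pweight Pw + cweight ((Ps.erase Pu).erase Pw) = cweight (Ps.erase Pu) :=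
        Finset.add_sum_erase _ pweight hPw'
      have e2 : pweight Pu + cweight (Ps.erase Pu) = cweight Ps :=
        Finset.add_sum_erase _ pweight hPu
      have e3 : cweight (insert Q ((Ps.erase Pu).erase Pw))
          ≤ pweight Q + cweight ((Ps.erase Pu).erase Pw) :=
        my_sum_insert_le _ _ _ (Nat.zero_le _)
      have e4 : pweight Q ≤ pweight Pu + pweight Pw := by
        simp only [pweight]
        omega
      omega

lemma closure_univ_lower (hn : ∀ i, 2 ≤ n i) (S : Set (HV n))
    (hSu : activationClosure (hammingGraph n) (fun _ => (2:ℤ)) S = Set.univ) :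
    t + 2 ≤ 2 * S.ncard := by
  classical
  set S' := S.toFinset with hS'
  set M := 2 * S'.card with hM
  set C : Set (Finset (HV n)) := {A | S' ⊆ A ∧ Good M A} with hC
  have hS'C : S' ∈ C := by
    refine ⟨subset_rfl, ⟨S'.image (fun s => {s}), ?_, ?_⟩⟩
    · intro z hz
      exact ⟨{z}, Finset.mem_image_of_mem _ hz, Finset.mem_singleton_self z⟩
    · have hinj : ∀ x ∈ S', ∀ y ∈ S', ({x} : Finset (HV n)) = {y} → x = y := by
        intro x _ y _ h
        exact Finset.singleton_injective h
      rw [cweight, Finset.sum_image hinj]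
      have hone : ∀ s : HV n, pweight {s} = 2 := by
        intro s
        have : varset ({s} : Finset (HV n)) = ∅ := by
          rw [Finset.eq_empty_iff_forall_notMem]
          intro i hi
          obtain ⟨a, ha, b, hb, hab⟩ := mem_varset.mp hi
          rw [Finset.mem_singleton] at ha hb
          rw [ha, hb] at hab
          exact hab rfl
        simp [pweight, this]
      calc ∑ s ∈ S', pweight {s} = ∑ _s ∈ S', 2 := Finset.sum_congr rfl (fun s _ => hone s)
        _ = 2 * S'.card := by rw [Finset.sum_const]; ring
        _ ≤ M := le_rfl
  obtain ⟨A, hAC, hAmax⟩ :=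
    Set.Finite.exists_maximalFor Finset.card C (Set.toFinite C) ⟨S', hS'C⟩
  have hclosed : activationClosed (hammingGraph n) (fun _ => (2:ℤ)) ↑A := by
    intro v hv
    by_contra hvA
    rw [Finset.mem_coe] at hvA
    have h2 : 2 ≤ ((↑A : Set (HV n)) ∩ (hammingGraph n).neighborSet v).ncard := by
      simp only at hv
      exact_mod_cast hv
    have h1 : 1 < ((↑A : Set (HV n)) ∩ (hammingGraph n).neighborSet v).ncard := by omega
    obtain ⟨u, w, hu, hw, huw⟩ :=
      (Set.one_lt_ncard_iff (Set.toFinite _)).mp h1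
    obtain ⟨i, hi1, hi2⟩ := adj_elim hu.2
    obtain ⟨j, hj1, hj2⟩ := adj_elim hw.2
    have hgood := good_step (Finset.mem_coe.mp hu.1) (Finset.mem_coe.mp hw.1) huw
      hi1 hi2 hj1 hj2 hAC.2
    have hmem : insert v A ∈ C :=
      ⟨subset_trans hAC.1 (Finset.subset_insert _ _), hgood⟩
    have hle : A.card ≤ (insert v A).card := Finset.card_le_card (Finset.subset_insert _ _)
    have heq := hAmax hmem hle
    rw [Finset.card_insert_of_notMem hvA] at heq
    omega
  have hsub : Set.univ ⊆ (↑A : Set (HV n)) := by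
    rw [← hSu]
    refine activationClosure_subset _ _ _ ?_ hclosed
    intro x hx
    exact Finset.mem_coe.mpr (hAC.1 (Set.mem_toFinset.mpr hx))
  have hA : A = Finset.univ := by
    rw [← Finset.coe_eq_univ]
    exact Set.univ_subset_iff.mp hsub
  have hfin := good_univ hn (hA ▸ hAC.2)
  have hcards : S.ncard = S'.card := Set.ncard_eq_toFinset_card' S
  omega

section upper
variable (hn : ∀ i, 2 ≤ n i)

def zv (hn : ∀ i, 2 ≤ n i) : HV n := fun i => ⟨0, by have := hn i; omega⟩

lemma lift {X : Set (HV n)}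
    (hstep : ∀ v u w : HV n, u ∈ X → w ∈ X → u ≠ w →
      (hammingGraph n).Adj v u → (hammingGraph n).Adj v w → v ∈ X)
    {K : ℕ} (hK : K < t)
    (hbase : ∀ z : HV n, (∀ i : Fin t, K ≤ i.1 → z i = zv hn i) → z ∈ X)
    (hline : ∀ c : Fin (n ⟨K, hK⟩), Function.update (zv hn) ⟨K, hK⟩ c ∈ X) :
    ∀ z : HV n, (∀ i : Fin t, K + 1 ≤ i.1 → z i = zv hn i) → z ∈ X := by
  classical
  set a : Fin t := ⟨K, hK⟩ with ha
  suffices H : ∀ N : ℕ, ∀ z : HV n,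
      (Finset.univ.filter fun i : Fin t => i.1 < K ∧ z i ≠ zv hn i).card = N →
      (∀ i : Fin t, K + 1 ≤ i.1 → z i = zv hn i) → z ∈ X by
    intro z hz
    exact H _ z rfl hz
  intro N
  induction N using Nat.strong_induction_on with
  | _ N IH =>
  intro z hN hz
  by_cases hzK : z a = zv hn a
  · apply hbase
    intro i hi
    by_cases hiK : i.1 = K
    · have : i = a := Fin.ext hiK
      rw [this]; exact hzK
    · exact hz i (by omega)
  · by_cases hemp : ∀ i : Fin t, i.1 < K → z i = zv hn i
    · have hzeq : z = Function.update (zv hn) a (z a) := by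
        funext i
        by_cases hiK : i = a
        · subst hiK; rw [Function.update_self]
        · rw [Function.update_of_ne hiK]
          have hne : i.1 ≠ K := fun h => hiK (Fin.ext h)
          by_cases hlt : i.1 < K
          · exact hemp i hlt
          · exact hz i (by omega)
      rw [hzeq]; exact hline _
    · push_neg at hemp
      obtain ⟨j, hjK, hjz⟩ := hemp
      have hja : j ≠ a := by
        intro h
        rw [h] at hjK
        exact absurd hjK (by simp [ha])
      set u : HV n := Function.update z j (zv hn j) with hu
      set w : HV n := Function.update z a (zv hn a) with hw
      have hu_supp : ∀ i : Fin t, K + 1 ≤ i.1 → u i = zv hn i := by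
        intro i hi
        have hij : i ≠ j := by
          intro h; rw [h] at hi; omega
        rw [hu, Function.update_of_ne hij]
        exact hz i hi
      have hjmem : j ∈ Finset.univ.filter fun i : Fin t => i.1 < K ∧ z i ≠ zv hn i := by
        simp [hjK, hjz]
      have hfer : (Finset.univ.filter fun i : Fin t => i.1 < K ∧ u i ≠ zv hn i)
          = (Finset.univ.filter fun i : Fin t => i.1 < K ∧ z i ≠ zv hn i).erase j := by
        ext i
        simp only [Finset.mem_filter, Finset.mem_univ, true_and, Finset.mem_erase]
        constructor
        · intro ⟨h1, h2⟩
          have hij : i ≠ j := by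
            intro h; subst h
            rw [hu, Function.update_self] at h2
            exact h2 rfl
          rw [hu, Function.update_of_ne hij] at h2
          exact ⟨hij, h1, h2⟩
        · intro ⟨hij, h1, h2⟩
          rw [hu, Function.update_of_ne hij]
          exact ⟨h1, h2⟩
      have hNpos : 0 < N := by
        rw [← hN]
        exact Finset.card_pos.mpr ⟨j, hjmem⟩
      have hu_card : (Finset.univ.filter fun i : Fin t => i.1 < K ∧ u i ≠ zv hn i).card = N - 1 := by
        rw [hfer, Finset.card_erase_of_mem hjmem, hN]
      have huX : u ∈ X := IH (N - 1) (by omega) u hu_card hu_supp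
      have hwX : w ∈ X := by
        apply hbase
        intro i hi
        by_cases hia : i = a
        · subst hia; rw [hw, Function.update_self]
        · rw [hw, Function.update_of_ne hia]
          have : i.1 ≠ K := fun h => hia (Fin.ext h)
          exact hz i (by omega)
      have hune : u ≠ w := by
        intro h
        have h2 := congrFun h a
        rw [hu, hw, Function.update_of_ne (Ne.symm hja), Function.update_self] at h2
        exact hzK h2
      exact hstep z u w huX hwX hune
        ((adj_update z j (zv hn j) (Ne.symm hjz)).symm)
        ((adj_update z a (zv hn a) (Ne.symm hzK)).symm)

lemma lineB {X : Set (HV n)}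
    (hstep : ∀ v u w : HV n, u ∈ X → w ∈ X → u ≠ w →
      (hammingGraph n).Adj v u → (hammingGraph n).Adj v w → v ∈ X)
    (a : Fin t) (c1 : Fin (n a)) (hc1 : c1 ≠ zv hn a)
    (h0 : zv hn ∈ X) (hy : Function.update (zv hn) a c1 ∈ X) :
    ∀ c : Fin (n a), Function.update (zv hn) a c ∈ X := by
  intro c
  by_cases hc0 : c = zv hn a
  · rw [hc0, Function.update_eq_self]; exact h0
  · by_cases hcc : c = c1
    · rw [hcc]; exact hy
    · refine hstep _ (zv hn) (Function.update (zv hn) a c1) h0 hy ?_ ?_ ?_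
      · intro h
        have := congrFun h a
        rw [Function.update_self] at this
        exact hc1 this.symm
      · exact adj_update (zv hn) a c hc0
      · have he : Function.update (Function.update (zv hn) a c1) a c
            = Function.update (zv hn) a c := Function.update_idem _ _ _
        have : (hammingGraph n).Adj
            (Function.update (Function.update (zv hn) a c1) a c)
            (Function.update (zv hn) a c1) := by
          apply adj_update
          rw [Function.update_self]
          exact hcc
        rwa [he] at this

lemma lineA {X : Set (HV n)}
    (hstep : ∀ v u w : HV n, u ∈ X → w ∈ X → u ≠ w →
      (hammingGraph n).Adj v u → (hammingGraph n).Adj v w → v ∈ X)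
    (a b : Fin t) (hab : a ≠ b) (ca : Fin (n a)) (cb : Fin (n b))
    (hca : ca ≠ zv hn a) (hcb : cb ≠ zv hn b)
    (h0 : zv hn ∈ X)
    (hy : Function.update (Function.update (zv hn) a ca) b cb ∈ X) :
    (∀ c : Fin (n a), Function.update (zv hn) a c ∈ X) ∧
    (∀ c : Fin (n b), Function.update (zv hn) b c ∈ X) := by
  set y := Function.update (Function.update (zv hn) a ca) b cb with hydef
  have hu1 : Function.update (zv hn) a ca ∈ X := by
    refine hstep _ (zv hn) y h0 hy ?_ ?_ ?_
    · intro h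
      have := congrFun h a
      rw [hydef, Function.update_of_ne hab, Function.update_self] at this
      exact hca this.symm
    · exact adj_update (zv hn) a ca hca
    · have : (hammingGraph n).Adj y (Function.update (zv hn) a ca) := by
        rw [hydef]
        apply adj_update
        rw [Function.update_of_ne (Ne.symm hab)]
        exact hcb
      exact this.symm
  have hu2 : Function.update (zv hn) b cb ∈ X := by
    have hy2 : Function.update (Function.update (zv hn) b cb) a ca ∈ X := by
      rw [← Function.update_comm hab]
      exact hy
    refine hstep _ (zv hn) (Function.update (Function.update (zv hn) b cb) a ca) h0 hy2 ?_ ?_ ?_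
    · intro h
      have := congrFun h b
      rw [Function.update_of_ne (Ne.symm hab), Function.update_self] at this
      exact hcb this.symm
    · exact adj_update (zv hn) b cb hcb
    · have : (hammingGraph n).Adj (Function.update (Function.update (zv hn) b cb) a ca)
          (Function.update (zv hn) b cb) := by
        apply adj_update
        rw [Function.update_of_ne hab]
        exact hca
      exact this.symm
  exact ⟨lineB hn hstep a ca hca h0 hu1, lineB hn hstep b cb hcb h0 hu2⟩

def ov (hn : ∀ i, 2 ≤ n i) (i : Fin t) : Fin (n i) := ⟨1, by have := hn i; omega⟩

def seedY (hn : ∀ i, 2 ≤ n i) (k : ℕ) : HV n :=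
  fun i => if i.1 = 2*k ∨ i.1 = 2*k+1 then ov hn i else zv hn i

noncomputable def seedSet (hn : ∀ i, 2 ≤ n i) : Finset (HV n) :=
  open scoped Classical in
  insert (zv hn) ((Finset.range ((t+1)/2)).image (seedY hn))

lemma ov_ne_zv (i : Fin t) : ov hn i ≠ zv hn i := by
  simp [ov, zv, Fin.ext_iff]

lemma seedY_at (k : ℕ) (h2k : 2*k < t) : seedY hn k ⟨2*k, h2k⟩ = ov hn ⟨2*k, h2k⟩ := by
  simp [seedY]

lemma seedSet_card : (seedSet hn).card = 1 + (t+1)/2 := by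
  classical
  have hlt : ∀ k, k < (t+1)/2 → 2*k < t := by intro k hk; omega
  have hinj : Set.InjOn (seedY hn) ↑(Finset.range ((t+1)/2)) := by
    intro k hk l hl heq
    by_contra hne
    rcases Nat.lt_or_ge k l with h | h
    · have h2k : 2*k < t := hlt k (by simpa using hk)
      have := congrFun heq ⟨2*k, h2k⟩
      rw [seedY_at] at this
      have h2 : seedY hn l ⟨2*k, h2k⟩ = zv hn ⟨2*k, h2k⟩ := by
        simp only [seedY]
        rw [if_neg (by omega)]
      exact ov_ne_zv hn _ (this.trans h2)
    · have hlk : l < k := lt_of_le_of_ne h (fun he => hne he.symm)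
      have h2l : 2*l < t := hlt l (by simpa using hl)
      have := congrFun heq ⟨2*l, h2l⟩
      rw [seedY_at] at this
      have h2 : seedY hn k ⟨2*l, h2l⟩ = zv hn ⟨2*l, h2l⟩ := by
        simp only [seedY]
        rw [if_neg (by omega)]
      exact ov_ne_zv hn _ (h2.symm.trans this).symm
  have hnotmem : zv hn ∉ (Finset.range ((t+1)/2)).image (seedY hn) := by
    intro hmem
    obtain ⟨k, hk, heq⟩ := Finset.mem_image.mp hmem
    have hk' : k < (t+1)/2 := Finset.mem_range.mp hk
    have h2k : 2*k < t := hlt k hk'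
    have := congrFun heq ⟨2*k, h2k⟩
    rw [seedY_at] at this
    exact ov_ne_zv hn _ this
  rw [seedSet, Finset.card_insert_of_notMem hnotmem, Finset.card_image_of_injOn hinj,
    Finset.card_range]
  omega

lemma seed_percolates :
    activationClosure (hammingGraph n) (fun _ => (2:ℤ)) ↑(seedSet hn) = Set.univ := by
  classical
  set X := activationClosure (hammingGraph n) (fun _ => (2:ℤ)) ↑(seedSet hn) with hX
  have hstep : ∀ v u w : HV n, u ∈ X → w ∈ X → u ≠ w →
      (hammingGraph n).Adj v u → (hammingGraph n).Adj v w → v ∈ X := by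
    intro v u w hu hw huw h1 h2
    exact mem_closure_of_two _ _ _ hu hw huw h1 h2 (by norm_num)
  have hseed : ∀ s ∈ seedSet hn, s ∈ X :=
    fun s hs => subset_activationClosure _ _ _ (Finset.mem_coe.mpr hs)
  have h0 : zv hn ∈ X := hseed _ (Finset.mem_insert_self _ _)
  have main : ∀ m, m ≤ (t+1)/2 →
      ∀ z : HV n, (∀ i : Fin t, 2*m ≤ i.1 → z i = zv hn i) → z ∈ X := by
    intro m
    induction m with
    | zero =>
        intro _ z hz
        have : z = zv hn := funext fun i => hz i (Nat.zero_le _)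
        rw [this]; exact h0
    | succ m IH =>
        intro hm z hz
        have hm' : m ≤ (t+1)/2 := le_trans (Nat.le_succ m) hm
        have h2m : 2*m < t := by omega
        have hyS : seedY hn m ∈ X :=
          hseed _ (Finset.mem_insert_of_mem
            (Finset.mem_image_of_mem _ (Finset.mem_range.mpr (by omega))))
        by_cases hb : 2*m+1 < t
        · have hab : (⟨2*m, h2m⟩ : Fin t) ≠ ⟨2*m+1, hb⟩ := by
            simp [Fin.ext_iff]
          have hyeq : seedY hn m =
              Function.update (Function.update (zv hn) ⟨2*m, h2m⟩ (ov hn ⟨2*m, h2m⟩))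
                ⟨2*m+1, hb⟩ (ov hn ⟨2*m+1, hb⟩) := by
            funext i
            by_cases hib : i = ⟨2*m+1, hb⟩
            · subst hib
              rw [Function.update_self]
              simp [seedY]
            · rw [Function.update_of_ne hib]
              by_cases hia : i = ⟨2*m, h2m⟩
              · subst hia
                rw [Function.update_self]
                simp [seedY]
              · rw [Function.update_of_ne hia]
                simp only [seedY]
                rw [if_neg]
                have h1 : i.1 ≠ 2*m := fun h => hia (Fin.ext h)
                have h2 : i.1 ≠ 2*m+1 := fun h => hib (Fin.ext h)
                omega
          obtain ⟨hla, hlb⟩ := lineA hn hstep ⟨2*m, h2m⟩ ⟨2*m+1, hb⟩ hab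
            (ov hn ⟨2*m, h2m⟩) (ov hn ⟨2*m+1, hb⟩) (ov_ne_zv hn _) (ov_ne_zv hn _)
            h0 (hyeq ▸ hyS)
          have s1 : ∀ z : HV n, (∀ i : Fin t, 2*m+1 ≤ i.1 → z i = zv hn i) → z ∈ X :=
            lift hn hstep h2m (IH hm') hla
          have s2 : ∀ z : HV n, (∀ i : Fin t, 2*m+1+1 ≤ i.1 → z i = zv hn i) → z ∈ X :=
            lift hn hstep hb s1 hlb
          exact s2 z (fun i hi => hz i (by omega))
        · have hyeq : seedY hn m =
              Function.update (zv hn) ⟨2*m, h2m⟩ (ov hn ⟨2*m, h2m⟩) := by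
            funext i
            by_cases hia : i = ⟨2*m, h2m⟩
            · subst hia
              rw [Function.update_self]
              simp [seedY]
            · rw [Function.update_of_ne hia]
              simp only [seedY]
              rw [if_neg]
              have h1 : i.1 ≠ 2*m := fun h => hia (Fin.ext h)
              have h2 : i.1 < t := i.isLt
              omega
          have hla := lineB hn hstep ⟨2*m, h2m⟩ (ov hn ⟨2*m, h2m⟩) (ov_ne_zv hn _)
            h0 (hyeq ▸ hyS)
          have s1 : ∀ z : HV n, (∀ i : Fin t, 2*m+1 ≤ i.1 → z i = zv hn i) → z ∈ X :=
            lift hn hstep h2m (IH hm') hla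
          exact s1 z (fun i hi => absurd i.isLt (by omega))
  rw [hX, Set.eq_univ_iff_forall]
  intro z
  exact main ((t+1)/2) le_rfl z (fun i hi => absurd i.isLt (by omega))

end upper
end lower

theorem minSeed_hammingGraph {t : ℕ} (ht : 1 ≤ t) (n : Fin t → ℕ)
    (hn : ∀ i, 2 ≤ n i) :
    minSeed (hammingGraph n) (fun _ => (2 : ℤ)) = 1 + (t + 1) / 2 := by
  rw [minSeed]
  have hmem : 1 + (t + 1) / 2 ∈ {m : ℕ | ∃ S : Set (Π i, Fin (n i)),
      activationClosure (hammingGraph n) (fun _ => (2:ℤ)) S = Set.univ ∧ S.ncard = m} := by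
    refine ⟨↑(seedSet hn), seed_percolates hn, ?_⟩
    rw [Set.ncard_coe_finset, seedSet_card hn]
  have hlb : ∀ m ∈ {m : ℕ | ∃ S : Set (Π i, Fin (n i)),
      activationClosure (hammingGraph n) (fun _ => (2:ℤ)) S = Set.univ ∧ S.ncard = m},
      1 + (t + 1) / 2 ≤ m := by
    rintro m ⟨S, hS, rfl⟩
    have := closure_univ_lower hn S hS
    omega
  exact le_antisymm (Nat.sInf_le hmem) (hlb _ (Nat.sInf_mem ⟨_, hmem⟩))
end
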